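/- Let Λ be a rank-n lattice in ℝⁿ invariant under the orthogonal reflection R in a hyperplane Π through the origin, with Λ₀ = Λ ∩ Π and w a point of Λ \ Π at minimal positive distance d from Π. Then w can be chosen in Π^⊥ if and only if Λ is the union over k ∈ ℤ of Λ₀ + k u for some u ∈ Π^⊥ (i.e. Λ is a vertical translation lattice with respect to Π). -/

import Mathlib

open Metric

private lemma infDist_sub_proj (n : ℕ) (K : Submodule ℝ (EuclideanSpace ℝ (Fin n)))
    (x : EuclideanSpace ℝ (Fin n)) :
    infDist x K = ‖x - Submodule.orthogonalProjectionOnto K x‖ := by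
  rw [Metric.infDist_eq_iInf, ← Submodule.starProjection_apply, Submodule.starProjection_minimal]
  simp only [dist_eq_norm]
  rfl

/-- Let `Λ` be a full-rank lattice in `ℝⁿ` invariant under the reflection in a hyperplane
`Π` through the origin, `Λ₀ = Λ ∩ Π`, and `d` the minimal (positive) distance to `Π` of
points of `Λ \ Π`.  Then a point `w ∈ Λ \ Π` realizing the distance `d` can be chosen in
`Π^⊥` if and only if `Λ` is a vertical translation lattice with respect to `Π`. -/
theorem lattice_reflection_vertical_iff (n : ℕ)
    (L : AddSubgroup (EuclideanSpace ℝ (Fin n)))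
    (hL : ∃ b : Fin n → EuclideanSpace ℝ (Fin n),
      LinearIndependent ℝ b ∧ L = AddSubgroup.closure (Set.range b))
    (Pl : Submodule ℝ (EuclideanSpace ℝ (Fin n)))
    (hPl : Module.finrank ℝ Pl = n - 1)
    (hinv : ∀ x, x ∈ L ↔ Pl.reflection x ∈ L)
    (d : ℝ) (hd0 : 0 < d)
    (hd : IsLeast {r : ℝ | ∃ y ∈ L, y ∉ Pl ∧
      infDist y (Pl : Set (EuclideanSpace ℝ (Fin n))) = r} d) :
    (∃ w ∈ L, w ∉ Pl ∧ infDist w (Pl : Set (EuclideanSpace ℝ (Fin n))) = d ∧ w ∈ Plᗮ) ↔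
      (∃ u ∈ Plᗮ, ∀ x, x ∈ L ↔ ∃ k : ℤ, x - k • u ∈ L ⊓ Pl.toAddSubgroup) := by
  set E := EuclideanSpace ℝ (Fin n)
  -- basic facts about the orthogonal projection
  have hproj : ∀ x : E, x ∈ Plᗮ → (Submodule.orthogonalProjectionOnto Pl x : E) = 0 := fun x hx => by
    rw [Submodule.orthogonalProjectionOnto_apply_of_mem_orthogonal hx, Submodule.coe_zero]
  have hmem : ∀ x : E, x ∈ Pl ↔ x - Submodule.orthogonalProjectionOnto Pl x = 0 := fun x => by
    rw [sub_eq_zero, eq_comm, ← Submodule.starProjection_apply, Submodule.starProjection_eq_self_iff]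
  constructor
  · rintro ⟨w, hwL, hwPl, hwd, hwperp⟩
    -- ‖w‖ = d, w ≠ 0
    have hwnorm : ‖w‖ = d := by
      rw [infDist_sub_proj, hproj w hwperp, sub_zero] at hwd; exact hwd
    have hwne : w ≠ 0 := by
      intro h; rw [h, norm_zero] at hwnorm; exact absurd hwnorm.symm (ne_of_gt hd0)
    -- Plᗮ = span ℝ {w}
    have hn : 1 ≤ n := by
      rcases Nat.eq_zero_or_pos n with h | h
      · exfalso; apply hwPl
        have : Subsingleton E := by
          subst h
          infer_instance
        rw [Subsingleton.elim w 0]; exact Pl.zero_mem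
      · exact h
    have hrank : Module.finrank ℝ Plᗮ = 1 := by
      have h1 := Submodule.finrank_add_finrank_orthogonal (K := Pl)
      have h2 : Module.finrank ℝ E = n := finrank_euclideanSpace_fin
      rw [h2, hPl] at h1
      omega
    have hspan : Submodule.span ℝ {w} = Plᗮ := by
      apply Submodule.eq_of_le_of_finrank_eq
      · rw [Submodule.span_le, Set.singleton_subset_iff]; exact hwperp
      · rw [hrank, finrank_span_singleton hwne]
    -- multiples of w in L have norm ≥ d unless zero, hence the coefficient set is ℤ
    have hbig : ∀ s : ℝ, s • w ∈ L → s ≠ 0 → 1 ≤ |s| := by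
      intro s hs hs0
      have hsperp : s • w ∈ Plᗮ := Plᗮ.smul_mem s hwperp
      have hsne : s • w ∉ Pl := by
        intro hmem'
        have : s • w = 0 := by
          have := (Submodule.mem_inf.2 ⟨hmem', hsperp⟩)
          rwa [Submodule.inf_orthogonal_eq_bot, Submodule.mem_bot] at this
        exact hs0 (by simpa [hwne] using smul_eq_zero.1 this)
      have hdist : infDist (s • w) (Pl : Set E) = |s| * d := by
        rw [infDist_sub_proj, hproj _ hsperp, sub_zero, norm_smul, hwnorm,
          Real.norm_eq_abs]
      have := hd.2 ⟨s • w, hs, hsne, hdist⟩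
      nlinarith [abs_nonneg s]
    have hint : ∀ c : ℝ, c • w ∈ L → ∃ m : ℤ, c = m := by
      intro c hc
      refine ⟨⌊c⌋, ?_⟩
      by_contra hne
      have hfr : (c - (⌊c⌋ : ℝ)) • w ∈ L := by
        have hz : ((⌊c⌋ : ℝ)) • w ∈ L := by
          have : (⌊c⌋ : ℤ) • w ∈ L := L.zsmul_mem hwL ⌊c⌋
          rwa [← Int.cast_smul_eq_zsmul ℝ] at this
        have h' := L.sub_mem hc hz
        rw [sub_smul]
        exact h'
      have h1 := hbig _ hfr (sub_ne_zero.2 fun h => hne h)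
      have h2 := Int.fract_nonneg c
      have h3 := Int.fract_lt_one c
      rw [Int.fract] at h2 h3
      rw [abs_of_nonneg h2] at h1
      linarith
    refine ⟨w, hwperp, fun x => ⟨fun hx => ?_, fun ⟨k, hk⟩ => ?_⟩⟩
    · -- decompose x
      have hvperp : x - Submodule.orthogonalProjectionOnto Pl x ∈ Plᗮ :=
        Submodule.sub_starProjection_mem_orthogonal x
      rw [← hspan, Submodule.mem_span_singleton] at hvperp
      obtain ⟨c, hc⟩ := hvperp
      -- x - reflection x = (2c) • w ∈ L
      have hrefl : x - Pl.reflection x = (2 * c) • w := by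
        rw [Submodule.reflection_apply, Submodule.starProjection_apply]
        have h2 : x - (2 • (Submodule.orthogonalProjectionOnto Pl x : E) - x)
            = (2 : ℝ) • (x - (Submodule.orthogonalProjectionOnto Pl x : E)) := by
          rw [two_smul ℕ, two_smul ℝ]
          abel
        rw [h2, ← hc, smul_smul]
      have h2c : (2 * c) • w ∈ L := by
        rw [← hrefl]; exact L.sub_mem hx ((hinv x).1 hx)
      obtain ⟨m, hm⟩ := hint _ h2c
      rcases Int.even_or_odd m with ⟨k, hk⟩ | ⟨k, hk⟩
      · -- c = k
        have hmr : (m : ℝ) = (k : ℝ) + (k : ℝ) := by exact_mod_cast hk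
        have hck : c = (k : ℝ) := by linarith [hm]
        refine ⟨k, AddSubgroup.mem_inf.2 ⟨?_, ?_⟩⟩
        · exact L.sub_mem hx (L.zsmul_mem hwL k)
        · rw [Submodule.mem_toAddSubgroup]
          have heq : x - (k : ℤ) • w = Submodule.orthogonalProjectionOnto Pl x := by
            rw [← Int.cast_smul_eq_zsmul ℝ, ← hck, hc]; abel
          rw [heq]; exact (Submodule.orthogonalProjectionOnto Pl x).2
      · -- contradiction: half distance
        exfalso
        have hmr : (m : ℝ) = 2 * (k : ℝ) + 1 := by exact_mod_cast hk
        have hck : c = (k : ℝ) + 1/2 := by linarith [hm]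
        set x' := x - (k : ℤ) • w with hx'def
        have hx'L : x' ∈ L := L.sub_mem hx (L.zsmul_mem hwL k)
        have hx'v : x' - Submodule.orthogonalProjectionOnto Pl x' = (1/2 : ℝ) • w := by
          have hPx' : (Submodule.orthogonalProjectionOnto Pl x' : E)
              = Submodule.orthogonalProjectionOnto Pl x - (k:ℝ) • (Submodule.orthogonalProjectionOnto Pl w : E) := by
            rw [hx'def, ← Int.cast_smul_eq_zsmul ℝ, map_sub, map_smul]
            push_cast
            rfl
          rw [hPx', hproj w hwperp, smul_zero, sub_zero, hx'def,
            ← Int.cast_smul_eq_zsmul ℝ]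
          have h3 : x - (k:ℝ) • w - Submodule.orthogonalProjectionOnto Pl x
              = (x - Submodule.orthogonalProjectionOnto Pl x) - (k:ℝ) • w := by abel
          rw [h3, ← hc, hck, add_smul]
          abel
        have hx'Pl : x' ∉ Pl := by
          rw [hmem, hx'v]
          simp [hwne]
        have hx'dist : infDist x' (Pl : Set E) = d / 2 := by
          rw [infDist_sub_proj, hx'v, norm_smul, hwnorm, Real.norm_eq_abs,
            abs_of_pos (by norm_num : (0:ℝ) < 1/2)]
          ring
        have := hd.2 ⟨x', hx'L, hx'Pl, hx'dist⟩
        linarith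
    · have h1 := (AddSubgroup.mem_inf.1 hk).1
      have h2 : (k : ℤ) • w ∈ L := L.zsmul_mem hwL k
      have := L.add_mem h1 h2
      simpa using this
  · rintro ⟨u, huPerp, hu⟩
    -- u ∈ L
    have huL : u ∈ L := (hu u).2 ⟨1, by
      have h0 : u - (1 : ℤ) • u = 0 := by simp
      rw [h0]
      exact AddSubgroup.mem_inf.2 ⟨L.zero_mem, Pl.toAddSubgroup.zero_mem⟩⟩
    obtain ⟨y₀, hy₀L, hy₀Pl, hy₀d⟩ := hd.1
    obtain ⟨k, hk⟩ := (hu y₀).1 hy₀L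
    have hkPl : y₀ - k • u ∈ Pl :=
      (Submodule.mem_toAddSubgroup _).1 (AddSubgroup.mem_inf.1 hk).2
    have huPl : u ∉ Pl := by
      intro h
      apply hy₀Pl
      have h1 : (k : ℤ) • u ∈ Pl := by
        rw [← Int.cast_smul_eq_zsmul ℝ]
        exact Pl.smul_mem _ h
      have := Pl.add_mem hkPl h1
      simpa using this
    have hune : u ≠ 0 := fun h => huPl (h ▸ Pl.zero_mem)
    have hudist : infDist u (Pl : Set E) = ‖u‖ := by
      rw [infDist_sub_proj, hproj u huPerp, sub_zero]
    have hle : d ≤ ‖u‖ := hd.2 ⟨u, huL, huPl, hudist⟩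
    have hkne : k ≠ 0 := by
      intro h
      rw [h] at hkPl
      simp only [zero_smul, sub_zero] at hkPl
      exact hy₀Pl hkPl
    have hP : (Submodule.orthogonalProjectionOnto Pl y₀ : E) = y₀ - k • u := by
      conv_lhs => rw [show y₀ = (y₀ - k • u) + (k:ℝ) • u by
        rw [Int.cast_smul_eq_zsmul]; abel]
      rw [map_add, map_smul, Submodule.coe_add, Submodule.coe_smul,
        ← Submodule.starProjection_apply Pl (y₀ - k • u), Submodule.starProjection_eq_self_iff.2 hkPl, hproj u huPerp, smul_zero, add_zero]
    have hy₀v : y₀ - Submodule.orthogonalProjectionOnto Pl y₀ = (k : ℝ) • u := by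
      rw [hP, Int.cast_smul_eq_zsmul]
      abel
    have hdk : d = |(k : ℝ)| * ‖u‖ := by
      rw [← hy₀d, infDist_sub_proj, hy₀v, norm_smul, Real.norm_eq_abs]
    have hk1 : (1 : ℝ) ≤ |(k : ℝ)| := by
      rw [← Int.cast_abs]
      exact_mod_cast Int.one_le_abs hkne
    have hge : ‖u‖ ≤ d := by
      rw [hdk]
      nlinarith [norm_nonneg u]
    exact ⟨u, huL, huPl, by rw [hudist]; linarith, huPerp⟩
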